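/- Let X be a complete CAT(0) space, ε > 0, and C ⊆ X a connected, closed subset such that for every x ∈ C the set B_ε(x) ∩ C is convex (where B_ε(x) is the closed ball of radius ε). Then C is convex, i.e., for all x, y ∈ C the geodesic segment from x to y is contained in C. -/

import Mathlib

open Set Metric

/-- A CAT(0) space structure: a geodesic bicombing (affinely parametrized on `[0,1]`)
satisfying the CAT(0) comparison inequality. -/
class CAT0 (X : Type*) [MetricSpace X] where
  geo : X → X → ℝ → X
  geo_zero : ∀ x y, geo x y 0 = x
  geo_one : ∀ x y, geo x y 1 = y
  geo_dist : ∀ x y, ∀ s ∈ Set.Icc (0:ℝ) 1, ∀ t ∈ Set.Icc (0:ℝ) 1,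
    dist (geo x y s) (geo x y t) = |s - t| * dist x y
  comparison : ∀ x y z, ∀ t ∈ Set.Icc (0:ℝ) 1,
    dist (geo x y t) z ^ 2 ≤ (1 - t) * dist x z ^ 2 + t * dist y z ^ 2
      - t * (1 - t) * dist x y ^ 2

/-- The geodesic segment between `x` and `y`. -/
def geoSeg (X : Type*) [MetricSpace X] [CAT0 X] (x y : X) : Set X :=
  (fun t => CAT0.geo x y t) '' Set.Icc (0:ℝ) 1

/-- A subset is (geodesically) convex if it contains the geodesic segment
between any two of its points. -/
def GConvex (X : Type*) [MetricSpace X] [CAT0 X] (C : Set X) : Prop :=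
  ∀ x ∈ C, ∀ y ∈ C, geoSeg X x y ⊆ C
open Filter Real

section Aux
variable {X : Type*} [MetricSpace X] [CAT0 X]

lemma half_mem_Icc : (1/2 : ℝ) ∈ Set.Icc (0:ℝ) 1 := by norm_num

noncomputable def cmid (a b : X) : X := CAT0.geo a b (1/2)

lemma dist_left_cmid (a b : X) : dist a (cmid a b) = dist a b / 2 := by
  have h := CAT0.geo_dist a b 0 (by norm_num) (1/2) half_mem_Icc
  rw [CAT0.geo_zero] at h
  rw [cmid, h]
  rw [show |(0:ℝ) - 1/2| = 1/2 by norm_num]; ring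

lemma dist_right_cmid (a b : X) : dist b (cmid a b) = dist a b / 2 := by
  have h := CAT0.geo_dist a b 1 (by norm_num) (1/2) half_mem_Icc
  rw [CAT0.geo_one] at h
  rw [cmid, h]
  rw [show |(1:ℝ) - 1/2| = 1/2 by norm_num]; ring

lemma eq_cmid {a b m : X} (h1 : dist a m ≤ dist a b / 2) (h2 : dist b m ≤ dist a b / 2) :
    cmid a b = m := by
  have c := CAT0.comparison a b m (1/2) half_mem_Icc
  have h1' : dist a m ^ 2 ≤ (dist a b / 2)^2 := by
    have := dist_nonneg (x := a) (y := m); nlinarith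
  have h2' : dist b m ^ 2 ≤ (dist a b / 2)^2 := by
    have := dist_nonneg (x := b) (y := m); nlinarith
  have hz : dist (cmid a b) m = 0 := by
    have hnn : 0 ≤ dist (cmid a b) m := dist_nonneg
    have c' : dist (cmid a b) m ^ 2 ≤ (1 - 1/2) * dist a m ^ 2 + (1/2) * dist b m ^ 2
        - (1/2) * (1 - 1/2) * dist a b ^ 2 := c
    nlinarith
  exact dist_eq_zero.mp hz

lemma cmid_self (a : X) : cmid a a = a := by
  have h := dist_left_cmid a a
  simp only [dist_self, zero_div] at h
  exact (dist_eq_zero.mp h).symm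

lemma cmid_comm (a b : X) : cmid a b = cmid b a := by
  refine (eq_cmid ?_ ?_).symm
  · rw [dist_right_cmid, dist_comm b a]
  · rw [dist_left_cmid, dist_comm b a]

lemma dist_cmid_left (p q q' : X) : dist (cmid p q) (cmid p q') ≤ dist q q' / 2 := by
  have c1 := CAT0.comparison p q' (cmid p q) (1/2) half_mem_Icc
  have c2 := CAT0.comparison p q q' (1/2) half_mem_Icc
  have hpm : dist p (cmid p q) = dist p q / 2 := dist_left_cmid p q
  have e1 : dist (CAT0.geo p q' (1/2)) (cmid p q) = dist (cmid p q) (cmid p q') := by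
    rw [dist_comm]; rfl
  have e2 : dist q' (cmid p q) = dist (CAT0.geo p q (1/2)) q' := by
    rw [dist_comm]; rfl
  rw [e1, e2] at c1
  have c2' : dist (CAT0.geo p q (1/2)) q' ^ 2 ≤ (1 - 1/2) * dist p q' ^ 2
      + (1/2) * dist q q' ^ 2 - (1/2) * (1 - 1/2) * dist p q ^ 2 := c2
  have hD : 0 ≤ dist (cmid p q) (cmid p q') := dist_nonneg
  have hq : 0 ≤ dist q q' := dist_nonneg
  rw [hpm] at c1
  have hsq : dist (cmid p q) (cmid p q') ^ 2 ≤ (dist q q' / 2) ^ 2 := by nlinarith [c1, c2']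
  calc dist (cmid p q) (cmid p q') = Real.sqrt (dist (cmid p q) (cmid p q') ^ 2) := (Real.sqrt_sq hD).symm
    _ ≤ Real.sqrt ((dist q q' / 2) ^ 2) := Real.sqrt_le_sqrt hsq
    _ = dist q q' / 2 := Real.sqrt_sq (by linarith)

lemma dist_cmid_cmid (p q p' q' : X) :
    dist (cmid p q) (cmid p' q') ≤ dist p p' / 2 + dist q q' / 2 := by
  calc dist (cmid p q) (cmid p' q')
      ≤ dist (cmid p q) (cmid p q') + dist (cmid p q') (cmid p' q') := dist_triangle _ _ _
    _ ≤ dist q q' / 2 + dist p p' / 2 := by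
        refine add_le_add (dist_cmid_left p q q') ?_
        rw [cmid_comm p q', cmid_comm p' q']
        exact dist_cmid_left q' p p'
    _ = dist p p' / 2 + dist q q' / 2 := by ring

end Aux

lemma chain_exists {Y : Type*} [MetricSpace Y] {C : Set Y} (hconn : IsConnected C)
    {δ : ℝ} (hδ : 0 < δ) {x y : Y} (hx : x ∈ C) (hy : y ∈ C) :
    ∃ n : ℕ, ∃ z : ℕ → Y, 1 ≤ n ∧ z 0 = x ∧ (∀ i, n ≤ i → z i = y) ∧ (∀ i, z i ∈ C) ∧
      (∀ i, dist (z i) (z (i+1)) ≤ δ) := by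
  set P : Y → Prop := fun w => ∃ n : ℕ, ∃ z : ℕ → Y, 1 ≤ n ∧ z 0 = x ∧ (∀ i, n ≤ i → z i = w)
    ∧ (∀ i, z i ∈ C) ∧ (∀ i, dist (z i) (z (i+1)) ≤ δ) with hP
  have hPx : P x := by
    refine ⟨1, fun _ => x, le_rfl, rfl, fun i _ => rfl, fun i => hx, fun i => by simp [hδ.le]⟩
  have hstep : ∀ w w', P w → w' ∈ C → dist w w' ≤ δ → P w' := by
    rintro w w' ⟨n, z, hn, h0, hn', hC, hs⟩ hw' hd
    refine ⟨n+1, fun i => if i ≤ n then z i else w', by omega, by simp only; rw [if_pos (Nat.zero_le n)]; exact h0, ?_, ?_, ?_⟩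
    · intro i hi; simp only; rw [if_neg (by omega)]
    · intro i; simp only; split
      · exact hC i
      · exact hw'
    · intro i; simp only
      rcases lt_trichotomy i n with h|h|h
      · rw [if_pos (by omega), if_pos (by omega)]; exact hs i
      · subst h; rw [if_pos le_rfl, if_neg (by omega), hn' i le_rfl]; exact hd
      · rw [if_neg (by omega), if_neg (by omega)]; simp [hδ.le]
  by_contra hcon
  push_neg at hcon
  have hPy : ¬ P y := by
    rintro ⟨n, z, h1, h2, h3, h4, h5⟩
    obtain ⟨i, hi⟩ := hcon n z h1 h2 h3 h4
    exact absurd (h5 i) (not_le.mpr hi)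
  set u : Set Y := ⋃ (w : Y) (_ : w ∈ C ∧ P w), ball w δ
  set v : Set Y := ⋃ (w : Y) (_ : w ∈ C ∧ ¬ P w), ball w δ
  have hu : IsOpen u := isOpen_iUnion fun w => isOpen_iUnion fun _ => isOpen_ball
  have hv : IsOpen v := isOpen_iUnion fun w => isOpen_iUnion fun _ => isOpen_ball
  have hcov : C ⊆ u ∪ v := by
    intro w hw
    by_cases h : P w
    · exact Or.inl (mem_iUnion.mpr ⟨w, mem_iUnion.mpr ⟨⟨hw, h⟩, mem_ball_self hδ⟩⟩)
    · exact Or.inr (mem_iUnion.mpr ⟨w, mem_iUnion.mpr ⟨⟨hw, h⟩, mem_ball_self hδ⟩⟩)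
  have h1 : (C ∩ u).Nonempty := ⟨x, hx, mem_iUnion.mpr ⟨x, mem_iUnion.mpr ⟨⟨hx, hPx⟩, mem_ball_self hδ⟩⟩⟩
  have h2 : (C ∩ v).Nonempty := ⟨y, hy, mem_iUnion.mpr ⟨y, mem_iUnion.mpr ⟨⟨hy, hPy⟩, mem_ball_self hδ⟩⟩⟩
  obtain ⟨w, hwC, hwu, hwv⟩ := hconn.isPreconnected u v hu hv hcov h1 h2
  obtain ⟨w1, hw1⟩ := mem_iUnion.mp hwu
  obtain ⟨⟨hw1C, hw1P⟩, hball1⟩ := mem_iUnion.mp hw1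
  obtain ⟨w2, hw2⟩ := mem_iUnion.mp hwv
  obtain ⟨⟨hw2C, hw2P⟩, hball2⟩ := mem_iUnion.mp hw2
  have hPw : P w := hstep w1 w hw1P hwC (by rw [dist_comm]; exact (mem_ball.mp hball1).le)
  exact hw2P (hstep w w2 hPw hw2C (mem_ball.mp hball2).le)

lemma decay (N : ℕ) (hN : 1 ≤ N) (a : ℕ → ℕ → ℝ)
    (ha0 : ∀ k i, 0 ≤ a k i)
    (hb0 : ∀ k, a k 0 = 0)
    (hbn : ∀ k i, N ≤ i → a k i = 0)
    (hrec : ∀ k j, j + 1 < N → a (k+1) (j+1) ≤ (a k j + a k (j+2))/2)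
    (i : ℕ) : Tendsto (fun k => a k i) atTop (nhds 0) := by
  rcases le_or_gt i N with hiN | hiN
  swap
  · have : (fun k => a k i) = fun _ => (0:ℝ) := funext fun k => hbn k i hiN.le
    rw [this]; exact tendsto_const_nhds
  set α : ℝ := Real.pi / (N + 2) with hα
  have hNR : (0:ℝ) < (N:ℝ) + 2 := by positivity
  have hα0 : 0 < α := by positivity
  have hαπ : α ≤ Real.pi / 2 := by
    rw [hα]; apply div_le_div_of_nonneg_left Real.pi_pos.le (by norm_num)
    have : (1:ℝ) ≤ (N:ℝ) := by exact_mod_cast hN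
    push_cast; linarith
  set lam : ℝ := Real.cos α with hlam
  have hlam0 : 0 ≤ lam := Real.cos_nonneg_of_mem_Icc ⟨by linarith, hαπ⟩
  have hlam1 : lam < 1 := by
    have := Real.cos_lt_cos_of_nonneg_of_le_pi (le_refl 0) (by linarith [Real.pi_pos]) hα0
    simpa using this
  set v : ℕ → ℝ := fun j => Real.sin (((j:ℝ)+1) * α) with hv
  have hvpos : ∀ j, j ≤ N → 0 < v j := by
    intro j hj
    apply Real.sin_pos_of_pos_of_lt_pi (by positivity)
    have h1 : ((j:ℝ)+1) ≤ (N:ℝ)+1 := by exact_mod_cast by omega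
    have h2 : ((j:ℝ)+1) * α < ((N:ℝ)+2) * α := by
      apply mul_lt_mul_of_pos_right _ hα0; linarith
    have h3 : ((N:ℝ)+2) * α = Real.pi := by rw [hα]; field_simp
    linarith
  have hv1 : ∀ j, v j ≤ 1 := fun j => Real.sin_le_one _
  have hid : ∀ j : ℕ, v j + v (j+2) = 2 * lam * v (j+1) := by
    intro j
    have e1 : ((j:ℝ)+1) * α = ((j:ℝ)+2) * α - α := by ring
    have e3 : (((j:ℕ)+2:ℕ):ℝ)+1 = ((j:ℝ)+2) + 1 := by push_cast; ring
    have e2 : (((j:ℕ)+1:ℕ):ℝ)+1 = ((j:ℝ)+2) := by push_cast; ring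
    simp only [hv, e1, e2, e3]
    rw [show (((j:ℝ)+2) + 1) * α = ((j:ℝ)+2) * α + α by ring, Real.sin_add, Real.sin_sub]
    ring
  set S := Finset.range (N+1) with hS
  have hSne : S.Nonempty := ⟨0, Finset.mem_range.mpr (by omega)⟩
  set vmin : ℝ := S.inf' hSne v with hvmin
  have hvmin0 : 0 < vmin := by
    rw [hvmin, Finset.lt_inf'_iff]
    intro b hb; exact hvpos b (by simpa [hS, Nat.lt_succ_iff] using hb)
  set M : ℝ := S.sup' hSne (a 0) with hM
  have hM0 : 0 ≤ M := le_trans (by rw [hb0]) (Finset.le_sup' (a 0) (Finset.mem_range.mpr (by omega : 0 < N+1)))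
  set c : ℝ := M / vmin with hc
  have hc0 : 0 ≤ c := div_nonneg hM0 hvmin0.le
  have main : ∀ k, ∀ j, j ≤ N → a k j ≤ c * lam^k * v j := by
    intro k
    induction k with
    | zero =>
      intro j hj
      have h1 : a 0 j ≤ M := Finset.le_sup' (a 0) (Finset.mem_range.mpr (by omega))
      have h2 : vmin ≤ v j := Finset.inf'_le v (Finset.mem_range.mpr (by omega))
      calc a 0 j ≤ M := h1
        _ = c * vmin := by rw [hc]; field_simp
        _ ≤ c * v j := by apply mul_le_mul_of_nonneg_left h2 hc0
        _ = c * lam^0 * v j := by ring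
    | succ k ih =>
      intro j hj
      rcases Nat.eq_zero_or_pos j with rfl | hj0
      · rw [hb0]
        have := hvpos 0 (by omega)
        positivity
      rcases eq_or_lt_of_le hj with rfl | hjlt
      · rw [hbn (k+1) j le_rfl]
        have := hvpos j le_rfl
        positivity
      obtain ⟨j', rfl⟩ : ∃ j'', j = j'' + 1 := ⟨j - 1, by omega⟩
      have hrec' := hrec k j' hjlt
      have i1 := ih j' (by omega)
      have i2 := ih (j'+2) (by omega)
      have hid' := hid j'
      have hlk : (0:ℝ) ≤ c * lam^k := by positivity
      calc a (k+1) (j'+1) ≤ (a k j' + a k (j'+2))/2 := hrec'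
        _ ≤ (c * lam^k * v j' + c * lam^k * v (j'+2))/2 := by linarith
        _ = c * lam^k * ((v j' + v (j'+2))/2) := by ring
        _ = c * lam^k * (lam * v (j'+1)) := by rw [hid']; ring
        _ = c * lam^(k+1) * v (j'+1) := by ring
  have hbound : ∀ k, a k i ≤ c * lam^k := by
    intro k
    calc a k i ≤ c * lam^k * v i := main k i hiN
      _ ≤ c * lam^k * 1 := by
          apply mul_le_mul_of_nonneg_left (hv1 i) (by positivity)
      _ = c * lam^k := by ring
  apply squeeze_zero (fun k => ha0 k i) hbound
  have := tendsto_pow_atTop_nhds_zero_of_lt_one hlam0 hlam1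
  simpa using this.const_mul c

theorem stmt0 {X : Type*} [MetricSpace X] [CompleteSpace X] [CAT0 X]
    (ε : ℝ) (hε : 0 < ε) (C : Set X) (hconn : IsConnected C) (hclosed : IsClosed C)
    (hloc : ∀ x ∈ C, GConvex X (closedBall x ε ∩ C)) :
    GConvex X C := by

  have SPmid : ∀ a ∈ C, ∀ b ∈ C, dist a b ≤ ε → cmid a b ∈ C := by
    intro a ha b hb hab
    have h1 : a ∈ closedBall a ε ∩ C := ⟨mem_closedBall_self hε.le, ha⟩
    have h2 : b ∈ closedBall a ε ∩ C := ⟨by rw [mem_closedBall, dist_comm]; exact hab, hb⟩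
    exact (hloc a ha a h1 b h2 ⟨1/2, half_mem_Icc, rfl⟩).2
  intro x hx y hy p hp
  obtain ⟨t, ht, rfl⟩ := hp
  obtain ⟨n, z, hn1, hz0, hzn, hzC, hzstep⟩ := chain_exists hconn (half_pos hε) hx hy
  -- Step A
  have keyA : ∀ N, n ≤ N → ∀ i, i ≤ N → CAT0.geo x y ((i:ℝ)/(N:ℝ)) ∈ C := by
    intro N hN i hiN
    have hN1 : 1 ≤ N := le_trans hn1 hN
    have hNR : (0:ℝ) < (N:ℝ) := by exact_mod_cast hN1
    set dxy := dist x y with hdxy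
    set g : ℕ → X := fun j => CAT0.geo x y (((min j N : ℕ):ℝ) / (N:ℝ)) with hg
    set F : (ℕ → X) → (ℕ → X) := fun w j =>
      if j = 0 then w 0 else if N ≤ j then w N else cmid (w (j-1)) (w (j+1)) with hF
    have hF0 : ∀ w : ℕ → X, F w 0 = w 0 := fun w => by simp [hF]
    have hFN : ∀ (w : ℕ → X) j, N ≤ j → F w j = w N := by
      intro w j hj
      have hj0 : j ≠ 0 := by omega
      simp only [hF]; rw [if_neg hj0, if_pos hj]
    have hFmid : ∀ (w : ℕ → X) j, 0 < j → j < N → F w (j) = cmid (w (j-1)) (w (j+1)) := by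
      intro w j h1 h2
      simp only [hF]; rw [if_neg (by omega), if_neg (by omega)]
    -- invariant
    set Inv : (ℕ → X) → Prop := fun w => w 0 = x ∧ (∀ j, N ≤ j → w j = y) ∧ (∀ j, w j ∈ C)
      ∧ (∀ j, dist (w j) (w (j+1)) ≤ ε/2) with hInvDef
    have hInvz : Inv z := ⟨hz0, fun j hj => hzn j (le_trans hN hj), hzC, hzstep⟩
    have hInvF : ∀ w, Inv w → Inv (F w) := by
      rintro w ⟨hw0, hwN, hwC, hwstep⟩
      have hw2 : ∀ j, dist (w j) (w (j+2)) ≤ ε := by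
        intro j
        calc dist (w j) (w (j+2)) ≤ dist (w j) (w (j+1)) + dist (w (j+1)) (w (j+2)) :=
              dist_triangle _ _ _
          _ ≤ ε := by linarith [hwstep j, hwstep (j+1)]
      refine ⟨by rw [hF0, hw0], fun j hj => by rw [hFN w j hj, hwN N le_rfl], ?_, ?_⟩
      · intro j
        rcases Nat.eq_zero_or_pos j with rfl | hj0
        · rw [hF0]; exact hwC 0
        rcases lt_or_ge j N with h2 | h2
        · obtain ⟨j', rfl⟩ : ∃ j'', j = j'' + 1 := ⟨j - 1, by omega⟩
          rw [hFmid w _ hj0 h2]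
          simp only [Nat.add_sub_cancel]
          exact SPmid _ (hwC j') _ (hwC (j'+2)) (hw2 j')
        · rw [hFN w j h2]; exact hwC N
      · intro j
        rcases Nat.eq_zero_or_pos j with rfl | hj0
        · -- j = 0
          rcases eq_or_lt_of_le hN1 with hN1' | hN1'
          · rw [hF0, hFN w 1 (by omega)]
            rw [← hN1']; exact hwstep 0
          · rw [hF0, hFmid w 1 (by omega) hN1']
            simp only [Nat.sub_self]
            calc dist (w 0) (cmid (w 0) (w 2))
                = dist (cmid (w 0) (w 0)) (cmid (w 0) (w 2)) := by rw [cmid_self]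
              _ ≤ dist (w 0) (w 0) / 2 + dist (w 0) (w 2) / 2 := dist_cmid_cmid _ _ _ _
              _ ≤ ε/2 := by simp only [dist_self]; linarith [hw2 0]
        rcases lt_or_ge (j+1) N with hj1 | hj1
        · obtain ⟨j', rfl⟩ : ∃ j'', j = j'' + 1 := ⟨j - 1, by omega⟩
          rw [hFmid w (j'+1) hj0 (by omega), hFmid w (j'+1+1) (by omega) hj1]
          simp only [Nat.add_sub_cancel]
          calc dist (cmid (w j') (w (j'+1+1))) (cmid (w (j'+1)) (w (j'+1+1+1)))
              ≤ dist (w j') (w (j'+1)) / 2 + dist (w (j'+1+1)) (w (j'+1+1+1)) / 2 :=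
                dist_cmid_cmid _ _ _ _
            _ ≤ ε/2 := by linarith [hwstep j', hwstep (j'+2)]
        rcases lt_or_ge j N with hjN | hjN
        · -- j = N - 1, j + 1 = N
          have hjN' : j + 1 = N := by omega
          obtain ⟨j', rfl⟩ : ∃ j'', j = j'' + 1 := ⟨j - 1, by omega⟩
          rw [hFmid w (j'+1) hj0 hjN, hFN w (j'+1+1) (by omega)]
          simp only [Nat.add_sub_cancel]
          have hwN' : w N = w (j'+1+1) := by rw [← hjN']
          rw [hwN']
          calc dist (cmid (w j') (w (j'+1+1))) (w (j'+1+1))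
              = dist (cmid (w j') (w (j'+1+1))) (cmid (w (j'+1+1)) (w (j'+1+1))) := by
                rw [cmid_self]
            _ ≤ dist (w j') (w (j'+1+1)) / 2 + dist (w (j'+1+1)) (w (j'+1+1)) / 2 :=
                dist_cmid_cmid _ _ _ _
            _ ≤ ε/2 := by simp only [dist_self]; linarith [hw2 j']
        · rw [hFN w j hjN, hFN w (j+1) (by omega)]
          simp only [dist_self]; linarith
    have hInv : ∀ k, Inv (F^[k] z) := by
      intro k
      induction k with
      | zero => simpa using hInvz
      | succ k ih => rw [Function.iterate_succ_apply']; exact hInvF _ ih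
    -- geodesic points and their midpoint structure
    have hIccg : ∀ j : ℕ, j ≤ N → ((j:ℝ)/(N:ℝ)) ∈ Set.Icc (0:ℝ) 1 := by
      intro j hj
      constructor
      · positivity
      · rw [div_le_one hNR]; exact_mod_cast hj
    have hgdist : ∀ j j' : ℕ, j ≤ N → j' ≤ N →
        dist (CAT0.geo x y ((j:ℝ)/(N:ℝ))) (CAT0.geo x y ((j':ℝ)/(N:ℝ)))
          = |(j:ℝ)/(N:ℝ) - (j':ℝ)/(N:ℝ)| * dxy :=
      fun j j' hj hj' => CAT0.geo_dist x y _ (hIccg j hj) _ (hIccg j' hj')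
    have hgmin : ∀ j : ℕ, j ≤ N → g j = CAT0.geo x y ((j:ℝ)/(N:ℝ)) := by
      intro j hj; rw [hg]; simp only [min_eq_left hj]
    have hgmid : ∀ j' : ℕ, j' + 1 < N → g (j'+1) = cmid (g j') (g (j'+2)) := by
      intro j' hj'
      rw [hgmin j' (by omega), hgmin (j'+1) (by omega), hgmin (j'+2) (by omega)]
      have d02 := hgdist j' (j'+2) (by omega) (by omega)
      have d01 := hgdist j' (j'+1) (by omega) (by omega)
      have d21 := hgdist (j'+2) (j'+1) (by omega) (by omega)
      have e02 : |(j':ℝ)/(N:ℝ) - ((j'+2:ℕ):ℝ)/(N:ℝ)| = 2/(N:ℝ) := by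
        push_cast
        rw [show (j':ℝ)/(N:ℝ) - ((j':ℝ)+2)/(N:ℝ) = -(2/(N:ℝ)) by field_simp; ring]
        rw [abs_neg, abs_of_nonneg (by positivity)]
      have e01 : |(j':ℝ)/(N:ℝ) - ((j'+1:ℕ):ℝ)/(N:ℝ)| = 1/(N:ℝ) := by
        push_cast
        rw [show (j':ℝ)/(N:ℝ) - ((j':ℝ)+1)/(N:ℝ) = -(1/(N:ℝ)) by field_simp; ring]
        rw [abs_neg, abs_of_nonneg (by positivity)]
      have e21 : |((j'+2:ℕ):ℝ)/(N:ℝ) - ((j'+1:ℕ):ℝ)/(N:ℝ)| = 1/(N:ℝ) := by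
        push_cast
        rw [show ((j':ℝ)+2)/(N:ℝ) - ((j':ℝ)+1)/(N:ℝ) = 1/(N:ℝ) by field_simp; norm_num]
        rw [abs_of_nonneg (by positivity)]
      have hd : 0 ≤ dxy := dist_nonneg
      refine (eq_cmid ?_ ?_).symm
      · rw [dist_comm] at d01
        rw [dist_comm (CAT0.geo x y ((j':ℝ)/(N:ℝ)))]
        rw [d01, d02, e01, e02]
        rw [show 2/(N:ℝ) * dxy / 2 = 1/(N:ℝ) * dxy by ring]
      · rw [d21, d02, e21, e02]
        rw [show 2/(N:ℝ) * dxy / 2 = 1/(N:ℝ) * dxy by ring]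
    -- decay
    have g0 : g 0 = x := by
      rw [hgmin 0 (by omega)]
      norm_num [CAT0.geo_zero]
    have gN : ∀ j, N ≤ j → g j = y := by
      intro j hj
      rw [hg]; simp only [min_eq_right hj]
      rw [div_self (ne_of_gt hNR), CAT0.geo_one]
    have htend := decay N hN1 (fun k j => dist (F^[k] z j) (g j))
      (fun k j => dist_nonneg)
      (fun k => by rw [(hInv k).1, g0, dist_self])
      (fun k j hj => by rw [(hInv k).2.1 j hj, gN j hj, dist_self])
      (by
        intro k j hj
        rw [Function.iterate_succ_apply', hFmid (F^[k] z) (j+1) (by omega) hj]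
        simp only [Nat.add_sub_cancel]
        rw [hgmid j hj]
        calc dist (cmid (F^[k] z j) (F^[k] z (j+1+1))) (cmid (g j) (g (j+2)))
            ≤ dist (F^[k] z j) (g j) / 2 + dist (F^[k] z (j+1+1)) (g (j+2)) / 2 :=
              dist_cmid_cmid _ _ _ _
          _ = (dist (F^[k] z j) (g j) + dist (F^[k] z (j+2)) (g (j+2)))/2 := by
              norm_num; ring)
      i
    have hlim : Tendsto (fun k => F^[k] z i) atTop (nhds (g i)) :=
      tendsto_iff_dist_tendsto_zero.mpr htend
    have hmem : g i ∈ C := hclosed.mem_of_tendsto hlim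
      (Eventually.of_forall fun k => (hInv k).2.2.1 i)
    rwa [hgmin i hiN] at hmem
  -- Step B: density
  have hseq : ∀ m : ℕ, CAT0.geo x y ((⌊t * ((n:ℝ)+(m:ℝ))⌋₊ : ℝ)/((n:ℝ)+(m:ℝ))) ∈ C := by
    intro m
    have hcast : ((n + m : ℕ):ℝ) = (n:ℝ) + (m:ℝ) := by push_cast; ring
    have hfl : ⌊t * ((n:ℝ)+(m:ℝ))⌋₊ ≤ n + m := by
      have h1 : t * ((n:ℝ)+(m:ℝ)) ≤ ((n+m:ℕ):ℝ) := by
        rw [hcast]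
        calc t * ((n:ℝ)+(m:ℝ)) ≤ 1 * ((n:ℝ)+(m:ℝ)) := by
              apply mul_le_mul_of_nonneg_right ht.2 (by positivity)
          _ = (n:ℝ)+(m:ℝ) := by ring
      calc ⌊t * ((n:ℝ)+(m:ℝ))⌋₊ ≤ ⌊((n+m:ℕ):ℝ)⌋₊ := Nat.floor_mono h1
        _ = n + m := Nat.floor_natCast _
    have := keyA (n+m) (Nat.le_add_right n m) ⌊t * ((n:ℝ)+(m:ℝ))⌋₊ hfl
    rwa [hcast] at this
  have hlimB : Tendsto (fun m : ℕ => CAT0.geo x y ((⌊t * ((n:ℝ)+(m:ℝ))⌋₊ : ℝ)/((n:ℝ)+(m:ℝ))))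
      atTop (nhds (CAT0.geo x y t)) := by
    rw [tendsto_iff_dist_tendsto_zero]
    have hn1R : (1:ℝ) ≤ (n:ℝ) := by exact_mod_cast hn1
    have hbound : ∀ m : ℕ, dist (CAT0.geo x y ((⌊t * ((n:ℝ)+(m:ℝ))⌋₊ : ℝ)/((n:ℝ)+(m:ℝ))))
        (CAT0.geo x y t) ≤ (1/((m:ℝ)+1)) * dist x y := by
      intro m
      have hnm : (0:ℝ) < (n:ℝ)+(m:ℝ) := by positivity
      set q : ℝ := (⌊t * ((n:ℝ)+(m:ℝ))⌋₊ : ℝ)/((n:ℝ)+(m:ℝ)) with hq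
      have hq0 : 0 ≤ q := by positivity
      have hql : q ≤ t := by
        rw [hq, div_le_iff₀ hnm]
        calc (⌊t * ((n:ℝ)+(m:ℝ))⌋₊ : ℝ) ≤ t * ((n:ℝ)+(m:ℝ)) :=
          Nat.floor_le (by have := ht.1; positivity)
          _ = t * ((n:ℝ)+(m:ℝ)) := rfl
      have hqg : t - q ≤ 1/((n:ℝ)+(m:ℝ)) := by
        have h2 : t * ((n:ℝ)+(m:ℝ)) < (⌊t * ((n:ℝ)+(m:ℝ))⌋₊ : ℝ) + 1 := Nat.lt_floor_add_one _
        have h3 : t < q + 1/((n:ℝ)+(m:ℝ)) := by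
          rw [hq, ← add_div, lt_div_iff₀ hnm]
          linarith
        linarith
      have hqIcc : q ∈ Set.Icc (0:ℝ) 1 := ⟨hq0, le_trans hql ht.2⟩
      have hd := CAT0.geo_dist x y q hqIcc t ht
      rw [hd]
      have habs : |q - t| ≤ 1/((m:ℝ)+1) := by
        rw [abs_sub_comm, abs_of_nonneg (by linarith)]
        have : 1/((n:ℝ)+(m:ℝ)) ≤ 1/((m:ℝ)+1) := by
          exact one_div_le_one_div_of_le (by positivity) (by linarith)
        linarith
      apply mul_le_mul_of_nonneg_right habs dist_nonneg
    apply squeeze_zero (fun m => dist_nonneg) hbound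
    have h1 : Tendsto (fun m : ℕ => 1/((m:ℝ)+1)) atTop (nhds 0) :=
      tendsto_one_div_add_atTop_nhds_zero_nat
    simpa using h1.mul_const (dist x y)
  exact hclosed.mem_of_tendsto hlimB (Eventually.of_forall hseq)
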